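/- Maximality of the central multinomial coefficient: Let N and C be positive integers with C ∣ N. For every function k : Fin C → ℕ with ∑_{j} k(j) = N, the multinomial coefficient N! / ∏_j (k(j))! is at most the central multinomial coefficient N! / ((N/C)!)^C. -/

import Mathlib

open Finset

private lemma prod_split {C : ℕ} (i j : Fin C) (hij : i ≠ j) (f : Fin C → ℕ) :
    ∏ x, f x = f i * (f j * ∏ x ∈ (univ.erase i).erase j, f x) := by
  rw [Finset.mul_prod_erase _ f (Finset.mem_erase.mpr ⟨hij.symm, mem_univ j⟩),
    Finset.mul_prod_erase _ f (mem_univ i)]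

private lemma sum_split {C : ℕ} (i j : Fin C) (hij : i ≠ j) (f : Fin C → ℕ) :
    ∑ x, f x = f i + (f j + ∑ x ∈ (univ.erase i).erase j, f x) := by
  rw [Finset.add_sum_erase _ f (Finset.mem_erase.mpr ⟨hij.symm, mem_univ j⟩),
    Finset.add_sum_erase _ f (mem_univ i)]

private lemma key (C m : ℕ) : ∀ n (k : Fin C → ℕ), (∑ x, (k x)^2) = n →
    (∑ x, k x) = C * m → m.factorial ^ C ≤ ∏ x, (k x).factorial := by
  intro n
  induction n using Nat.strong_induction_on with
  | _ n ih =>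
    intro k hn hs
    by_cases hall : ∀ x, k x = m
    · simp [hall, Finset.prod_const]
    · push_neg at hall
      obtain ⟨x0, hx0⟩ := hall
      have hCm : (∑ _x : Fin C, m) = C * m := by
        simp [Finset.sum_const, mul_comm]
      have hi : ∃ i, m < k i := by
        by_contra h; push_neg at h
        have hlt := Finset.sum_lt_sum (f := k) (g := fun _ => m)
          (fun i _ => h i) ⟨x0, mem_univ x0, lt_of_le_of_ne (h x0) hx0⟩
        rw [hs, hCm] at hlt
        exact absurd hlt (lt_irrefl _)
      have hj : ∃ j, k j < m := by
        by_contra h; push_neg at h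
        have hlt := Finset.sum_lt_sum (f := fun _ => m) (g := k)
          (fun i _ => h i) ⟨x0, mem_univ x0, lt_of_le_of_ne (h x0) (Ne.symm hx0)⟩
        rw [hs, hCm] at hlt
        exact absurd hlt (lt_irrefl _)
      obtain ⟨i, hi⟩ := hi
      obtain ⟨j, hj⟩ := hj
      have hij : i ≠ j := by
        intro h; rw [h] at hi; omega
      set k' := Function.update (Function.update k i (k i - 1)) j (k j + 1) with hk'
      have hk'i : k' i = k i - 1 := by
        simp [hk', Function.update_of_ne hij, Function.update_self]
      have hk'j : k' j = k j + 1 := by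
        simp [hk', Function.update_self]
      have hk'x : ∀ x, x ≠ i → x ≠ j → k' x = k x := by
        intro x hxi hxj
        simp [hk', Function.update_of_ne hxj, Function.update_of_ne hxi]
      have hmem : ∀ x ∈ (univ.erase i).erase j, k' x = k x := by
        intro x hx
        rw [Finset.mem_erase, Finset.mem_erase] at hx
        exact hk'x x hx.2.1 hx.1
      have hrest_sum : ∑ x ∈ (univ.erase i).erase j, k' x
          = ∑ x ∈ (univ.erase i).erase j, k x :=
        Finset.sum_congr rfl hmem
      have hrest_sq : ∑ x ∈ (univ.erase i).erase j, (k' x)^2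
          = ∑ x ∈ (univ.erase i).erase j, (k x)^2 :=
        Finset.sum_congr rfl fun x hx => by rw [hmem x hx]
      have hrest_prod : ∏ x ∈ (univ.erase i).erase j, (k' x).factorial
          = ∏ x ∈ (univ.erase i).erase j, (k x).factorial :=
        Finset.prod_congr rfl fun x hx => by rw [hmem x hx]
      have hs0 := sum_split i j hij k
      have hs' : ∑ x, k' x = C * m := by
        rw [sum_split i j hij k', hk'i, hk'j, hrest_sum]
        omega
      have hsq : (k i - 1)^2 + (k j + 1)^2 < (k i)^2 + (k j)^2 := by
        obtain ⟨a, ha⟩ : ∃ a, k i = a + 1 := ⟨k i - 1, by omega⟩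
        have hba : k j < a := by omega
        rw [ha]
        simp only [Nat.add_sub_cancel]
        nlinarith
      have hn' : ∑ x, (k' x)^2 < n := by
        rw [sum_split i j hij (fun x => (k' x)^2)] at *
        rw [sum_split i j hij (fun x => (k x)^2)] at hn
        simp only [hk'i, hk'j, hrest_sq]
        omega
      have hfact : ∏ x, (k' x).factorial ≤ ∏ x, (k x).factorial := by
        rw [prod_split i j hij, prod_split i j hij, hk'i, hk'j, hrest_prod]
        set P := ∏ x ∈ (univ.erase i).erase j, (k x).factorial
        have hki : k i = (k i - 1) + 1 := by omega
        calc (k i - 1).factorial * ((k j + 1).factorial * P)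
            = (k j + 1) * ((k i - 1).factorial * ((k j).factorial * P)) := by
              rw [Nat.factorial_succ]; ring
          _ ≤ k i * ((k i - 1).factorial * ((k j).factorial * P)) :=
              Nat.mul_le_mul_right _ (by omega)
          _ = (k i).factorial * ((k j).factorial * P) := by
              conv_rhs => rw [hki, Nat.factorial_succ, ← hki]
              ring
      exact le_trans (ih _ hn' k' rfl hs') hfact

/-- Maximality of the central multinomial coefficient. -/
theorem central_multinomial_maximal (N C : ℕ) (hN : 0 < N) (hC : 0 < C)
    (hdvd : C ∣ N) (k : Fin C → ℕ) (hsum : ∑ j, k j = N) :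
    Nat.multinomial Finset.univ k ≤
      Nat.multinomial Finset.univ (fun _ : Fin C => N / C) := by
  set m := N / C with hm
  have hNm : C * m = N := Nat.mul_div_cancel' hdvd
  have h1 := Nat.multinomial_spec univ k
  have h2 := Nat.multinomial_spec univ (fun _ : Fin C => m)
  have hsum2 : (∑ _x : Fin C, m) = N := by
    simp [Finset.sum_const, mul_comm, hNm]
  have hprod2 : (∏ _x : Fin C, m.factorial) = m.factorial ^ C := by
    simp [Finset.prod_const]
  rw [hsum2, hprod2] at h2
  rw [hsum] at h1
  have hkey := key C m (∑ x, (k x)^2) k rfl (by rw [hsum, hNm])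
  have hpos : 0 < m.factorial ^ C := pow_pos m.factorial_pos _
  have : Nat.multinomial univ k * m.factorial ^ C ≤
      Nat.multinomial univ (fun _ : Fin C => m) * m.factorial ^ C := by
    calc Nat.multinomial univ k * m.factorial ^ C
        ≤ Nat.multinomial univ k * ∏ x, (k x).factorial :=
          Nat.mul_le_mul_left _ hkey
      _ = N.factorial := by rw [mul_comm]; exact h1
      _ = Nat.multinomial univ (fun _ : Fin C => m) * m.factorial ^ C := by
          rw [mul_comm]; exact h2.symm
  exact Nat.le_of_mul_le_mul_right this hpos
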